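/- In the free associative algebra 𝒜 on generators X₁,…,Xₙ over a field of characteristic zero, let J be the two-sided ideal generated by all elements XᵢXⱼ − XⱼXᵢ − [Xᵢ,Xⱼ], where [·,·] is a Lie bracket on the span L of the Xᵢ. Then the difference of any two equipollent monomials of degree m is congruent modulo J to a polynomial of degree at most m−1. -/

import Mathlib

open scoped BigOperators

noncomputable section

/-- The word `X₁^{α₁} ⋯ Xₙ^{αₙ}` as a list of generator indices. -/
def word (n : ℕ) (α : Fin n → ℕ) : List (Fin n) :=
  (List.finRange n).flatMap fun i => List.replicate (α i) i

/-- The symmetrization `symz(X^(α)) = (1/m!) ∑_{σ ∈ Σₘ} X'_{σ(1)} ⋯ X'_{σ(m)}`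
of the monomial `X^(α)` in the free associative algebra. -/
def symz (K : Type) [Field K] (n : ℕ) (α : Fin n → ℕ) : FreeAlgebra K (Fin n) :=
  ((Nat.factorial (word n α).length : K))⁻¹ •
    ∑ σ : Equiv.Perm (Fin (word n α).length),
      (List.ofFn fun j => FreeAlgebra.ι K ((word n α).get (σ j))).prod

/-- Regular homogeneous polynomials of degree `m`: the span of `m`-th powers of
linear forms in the generators. -/
def RegHom (K : Type) [Field K] (n m : ℕ) : Submodule K (FreeAlgebra K (Fin n)) :=
  Submodule.span K {x | ∃ c : Fin n → K, x = (∑ i, c i • FreeAlgebra.ι K i) ^ m}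

/-- Regular polynomials: the span of all powers of linear forms in the generators. -/
def Reg (K : Type) [Field K] (n : ℕ) : Submodule K (FreeAlgebra K (Fin n)) :=
  Submodule.span K {x | ∃ (m : ℕ) (c : Fin n → K), x = (∑ i, c i • FreeAlgebra.ι K i) ^ m}

/-- The symmetrization map `Φ` from commutative polynomials to the free algebra,
sending `x^(α)` to `symz(X^(α))` and extended linearly. -/
def Phi (K : Type) [Field K] (n : ℕ) (p : MvPolynomial (Fin n) K) : FreeAlgebra K (Fin n) :=
  ∑ d ∈ p.support, p.coeff d • symz K n (fun i => d i)


/-- The embedding of the Lie algebra `L` into the free algebra via the basis `b`. -/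
def emb (K : Type) [Field K] (n : ℕ) {L : Type} [LieRing L] [LieAlgebra K L]
    (b : Module.Basis (Fin n) K L) (x : L) : FreeAlgebra K (Fin n) :=
  ∑ k, b.repr x k • FreeAlgebra.ι K k

/-- The two-sided ideal `J` generated by `XY - YX - [X,Y]`, `X, Y ∈ L`, realized as the
span of all trinomial products `P (XY - YX - [X,Y]) Q`. -/
def Jspan (K : Type) [Field K] (n : ℕ) {L : Type} [LieRing L] [LieAlgebra K L]
    (b : Module.Basis (Fin n) K L) : Submodule K (FreeAlgebra K (Fin n)) :=
  Submodule.span K {x | ∃ (P Q : FreeAlgebra K (Fin n)) (X Y : L),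
    x = P * (emb K n b X * emb K n b Y - emb K n b Y * emb K n b X - emb K n b ⁅X, Y⁆) * Q}

/-- Elements of degree at most `k` in the free algebra. -/
def Fdeg (K : Type) [Field K] (n k : ℕ) : Submodule K (FreeAlgebra K (Fin n)) :=
  Submodule.span K {x | ∃ l : List (Fin n), l.length ≤ k ∧ x = (l.map (FreeAlgebra.ι K)).prod}

variable (K : Type) [Field K] (n : ℕ) {L : Type} [LieRing L] [LieAlgebra K L]
  (b : Module.Basis (Fin n) K L)

lemma emb_basis (i : Fin n) : emb K n b (b i) = FreeAlgebra.ι K i := by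
  unfold emb
  rw [Finset.sum_eq_single i]
  · simp
  · intro k _ hk; simp [Finsupp.single_apply, Ne.symm hk]
  · simp

lemma list_prod_mem_fdeg {k : ℕ} (l : List (Fin n)) (h : l.length ≤ k) :
    (l.map (FreeAlgebra.ι K)).prod ∈ Fdeg K n k :=
  Submodule.subset_span ⟨l, h, rfl⟩

lemma fdeg_mul_ι {k : ℕ} (a : Fin n) {x : FreeAlgebra K (Fin n)} (hx : x ∈ Fdeg K n k) :
    FreeAlgebra.ι K a * x ∈ Fdeg K n (k + 1) := by
  induction hx using Submodule.span_induction with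
  | mem z hz =>
    obtain ⟨l, hl, rfl⟩ := hz
    exact Submodule.subset_span ⟨a :: l, by simpa using Nat.succ_le_succ hl, by simp⟩
  | zero => simp
  | add x y _ _ hx hy => rw [mul_add]; exact add_mem hx hy
  | smul c x _ hx => rw [mul_smul_comm]; exact Submodule.smul_mem _ _ hx

lemma emb_mul_mem_fdeg {k : ℕ} (z : L) {x : FreeAlgebra K (Fin n)} (hx : x ∈ Fdeg K n k) :
    emb K n b z * x ∈ Fdeg K n (k + 1) := by
  unfold emb
  rw [Finset.sum_mul]
  refine Submodule.sum_mem _ fun i _ => ?_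
  rw [smul_mul_assoc]
  exact Submodule.smul_mem _ _ (fdeg_mul_ι K n i hx)

lemma jspan_mul_left (r : FreeAlgebra K (Fin n)) {x : FreeAlgebra K (Fin n)}
    (hx : x ∈ Jspan K n b) : r * x ∈ Jspan K n b := by
  induction hx using Submodule.span_induction with
  | mem z hz =>
    obtain ⟨P, Q, X, Y, rfl⟩ := hz
    exact Submodule.subset_span ⟨r * P, Q, X, Y, by rw [← mul_assoc, ← mul_assoc]⟩
  | zero => simp
  | add x y _ _ hx hy => rw [mul_add]; exact add_mem hx hy
  | smul c x _ hx => rw [mul_smul_comm]; exact Submodule.smul_mem _ _ hx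

lemma perm_diff_mem (l₁ l₂ : List (Fin n)) (h : l₁.Perm l₂) :
    (l₁.map (FreeAlgebra.ι K)).prod - (l₂.map (FreeAlgebra.ι K)).prod
      ∈ Fdeg K n (l₁.length - 1) ⊔ Jspan K n b := by
  induction h with
  | nil => simp
  | cons a h ih =>
    rename_i t₁ t₂
    rcases t₁ with _ | ⟨c, t⟩
    · rw [List.Perm.eq_nil h.symm]; simp
    · have : ((a :: c :: t).map (FreeAlgebra.ι K)).prod - ((a :: t₂).map (FreeAlgebra.ι K)).prod
          = FreeAlgebra.ι K a *
            (((c :: t).map (FreeAlgebra.ι K)).prod - (t₂.map (FreeAlgebra.ι K)).prod) := by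
        simp [mul_sub]
      rw [this]
      have hlen : (a :: c :: t).length - 1 = (c :: t).length - 1 + 1 := by simp
      rw [hlen]
      rcases Submodule.mem_sup.1 ih with ⟨y, hy, z, hz, hyz⟩
      rw [← hyz, mul_add]
      exact Submodule.add_mem_sup (fdeg_mul_ι K n a hy) (jspan_mul_left K n b _ hz)
  | swap x y l =>
    have key : ((y :: x :: l).map (FreeAlgebra.ι K)).prod
        - ((x :: y :: l).map (FreeAlgebra.ι K)).prod
        = (emb K n b (b y) * emb K n b (b x) - emb K n b (b x) * emb K n b (b y)
            - emb K n b ⁅b y, b x⁆) * (l.map (FreeAlgebra.ι K)).prod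
          + emb K n b ⁅b y, b x⁆ * (l.map (FreeAlgebra.ι K)).prod := by
      simp only [List.map_cons, List.prod_cons, emb_basis]
      noncomm_ring
    rw [key]
    refine Submodule.add_mem _ (Submodule.mem_sup_right ?_) (Submodule.mem_sup_left ?_)
    · exact Submodule.subset_span ⟨1, (l.map (FreeAlgebra.ι K)).prod, b y, b x, by rw [one_mul]⟩
    · have : (y :: x :: l).length - 1 = l.length + 1 := by simp
      rw [this]
      exact emb_mul_mem_fdeg K n b _ (list_prod_mem_fdeg K n l le_rfl)
  | trans h₁ h₂ ih₁ ih₂ =>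
    rw [← h₁.length_eq] at ih₂
    have := add_mem ih₁ ih₂
    rwa [sub_add_sub_cancel] at this

theorem equipollent_difference_lower_degree_mod_J (K : Type) [Field K] [CharZero K]
    (n : ℕ) (L : Type) [LieRing L] [LieAlgebra K L] (b : Module.Basis (Fin n) K L)
    (m : ℕ) (w : Fin m → Fin n) (σ : Equiv.Perm (Fin m)) :
    ∃ y ∈ Fdeg K n (m - 1),
      ((List.ofFn fun j => FreeAlgebra.ι K (w j)).prod
          - (List.ofFn fun j => FreeAlgebra.ι K (w (σ j))).prod) - y
        ∈ Jspan K n b := by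
  have hperm : (List.ofFn w).Perm (List.ofFn (w ∘ σ)) := (σ.ofFn_comp_perm w).symm
  have h := perm_diff_mem K n b _ _ hperm
  rw [List.length_ofFn] at h
  have e1 : (List.ofFn w).map (FreeAlgebra.ι K) = List.ofFn fun j => FreeAlgebra.ι K (w j) := by
    rw [List.map_ofFn]; rfl
  have e2 : (List.ofFn (w ∘ σ)).map (FreeAlgebra.ι K)
      = List.ofFn fun j => FreeAlgebra.ι K (w (σ j)) := by
    rw [List.map_ofFn]; rfl
  rw [e1, e2] at h
  rcases Submodule.mem_sup.1 h with ⟨y, hy, z, hz, hyz⟩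
  exact ⟨y, hy, by rw [← hyz]; simpa using hz⟩

end
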